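/- Define P_{2n} for n ≤ 0 by P₀ = M⁻², P₋₂ = M²x² + (M⁴ - M² + 1)x + M², and P_{2n} = Q·P_{2(n+1)} - M⁸·P_{2(n+2)} for n ≤ -2, with Q = -M⁴x³ + (-2M⁶+2M⁴-2M²)x² + (-M⁸+2M⁶-3M⁴+2M²-1)x + 2M⁴. Then for every n ≤ -1, the degree of P_{2n} in x equals -(3n + 1). -/

import Mathlib

open Polynomial

/-- `M` as a unit of the Laurent polynomial ring `ℂ[M, M⁻¹]`. -/
noncomputable def mL : LaurentPolynomial ℂ := LaurentPolynomial.T 1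

/-- `Q ∈ (ℂ[M,M⁻¹])[x]`. -/
noncomputable def QnegPoly : Polynomial (LaurentPolynomial ℂ) :=
  Polynomial.C (-(mL ^ 4)) * X ^ 3 + Polynomial.C (-2 * mL ^ 6 + 2 * mL ^ 4 - 2 * mL ^ 2) * X ^ 2 +
    Polynomial.C (-(mL ^ 8) + 2 * mL ^ 6 - 3 * mL ^ 4 + 2 * mL ^ 2 - 1) * X + Polynomial.C (2 * mL ^ 4)

/-- `Pneg k` is `P_{2n}` for `n = -k ≤ 0`: `P₀ = M⁻²`, `P₋₂` explicit, and
`P_{2n} = Q·P_{2(n+1)} - M⁸·P_{2(n+2)}` for `n ≤ -2`. -/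
noncomputable def Pneg : ℕ → Polynomial (LaurentPolynomial ℂ)
  | 0 => Polynomial.C (LaurentPolynomial.T (-2))
  | 1 => Polynomial.C (mL ^ 2) * X ^ 2 + Polynomial.C (mL ^ 4 - mL ^ 2 + 1) * X + Polynomial.C (mL ^ 2)
  | k + 2 => QnegPoly * Pneg (k + 1) - Polynomial.C (mL ^ 8) * Pneg k

lemma mL_ne_zero : mL ≠ 0 := (LaurentPolynomial.isUnit_T (R := ℂ) 1).ne_zero

lemma mL_pow_ne_zero (k : ℕ) : mL ^ k ≠ 0 := pow_ne_zero _ mL_ne_zero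

lemma QnegPoly_natDegree : QnegPoly.natDegree = 3 := by
  unfold QnegPoly
  compute_degree!
  exact mL_ne_zero

lemma QnegPoly_ne_zero : QnegPoly ≠ 0 := fun h => by
  have := QnegPoly_natDegree; simp [h] at this

lemma Pneg_one_natDegree : (Pneg 1).natDegree = 2 := by
  show (Polynomial.C (mL ^ 2) * X ^ 2 + Polynomial.C (mL ^ 4 - mL ^ 2 + 1) * X
      + Polynomial.C (mL ^ 2)).natDegree = 2
  compute_degree!
  exact mL_ne_zero

lemma Pneg_natDegree_aux : ∀ k : ℕ, (Pneg (k + 1)).natDegree = 3 * k + 2 := by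
  intro k
  induction k using Nat.strong_induction_on with
  | _ k ih =>
    match k with
    | 0 => simpa using Pneg_one_natDegree
    | j + 1 =>
      have ih1 : (Pneg (j + 1)).natDegree = 3 * j + 2 := ih j (by omega)
      have hne : Pneg (j + 1) ≠ 0 := fun h => by simp [h] at ih1
      have hmul : (QnegPoly * Pneg (j + 1)).natDegree = 3 * (j + 1) + 2 := by
        rw [natDegree_mul QnegPoly_ne_zero hne, QnegPoly_natDegree, ih1]; ring
      have hlt : (Polynomial.C (mL ^ 8) * Pneg j).natDegree
          < (QnegPoly * Pneg (j + 1)).natDegree := by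
        rw [hmul]
        have hle : (Pneg j).natDegree ≤ 3 * j + 2 := by
          cases j with
          | zero => simp [Pneg]
          | succ i => rw [ih i (by omega)]; omega
        calc (Polynomial.C (mL ^ 8) * Pneg j).natDegree ≤ (Pneg j).natDegree :=
              natDegree_C_mul_le _ _
          _ < 3 * (j + 1) + 2 := by omega
      show (QnegPoly * Pneg (j + 1) - Polynomial.C (mL ^ 8) * Pneg j).natDegree = _
      rw [natDegree_sub_eq_left_of_natDegree_lt hlt, hmul]

/-- For every `n ≤ -1`, the degree of `P_{2n}` in `x` equals `-(3n + 1)`. -/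
theorem Pneg_natDegree (n : ℤ) (hn : n ≤ -1) :
    (Pneg (-n).toNat).natDegree = (-(3 * n + 1)).toNat := by
  obtain ⟨j, hj⟩ : ∃ j : ℕ, (-n).toNat = j + 1 := ⟨(-n).toNat - 1, by omega⟩
  rw [hj, Pneg_natDegree_aux j]
  omega
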